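/- As t → 0⁺, ∑_{ℓ=1}^∞ e^{−ℓ(ℓ+1)t}·(2ℓ+1)²/(ℓ(ℓ+1)) = 2√(π/t) + O(1). -/

import Mathlib

open Real Filter Asymptotics MeasureTheory Set

namespace HKDaux

lemma summable_E {t : ℝ} (ht : 0 < t) :
    Summable (fun n : ℕ => Real.exp (-((n:ℝ)+1) * ((n:ℝ)+2) * t)) := by
  apply Summable.of_nonneg_of_le (fun n => (Real.exp_pos _).le)
    (fun n => ?_) (summable_geometric_of_lt_one (Real.exp_pos (-t)).le
      (by rwa [Real.exp_lt_one_iff, neg_lt_zero]))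
  rw [← Real.exp_nat_mul]
  apply Real.exp_le_exp.2
  have h0 : (0:ℝ) ≤ (n:ℝ) := Nat.cast_nonneg n
  nlinarith [mul_nonneg (mul_nonneg h0 h0) ht.le, mul_nonneg h0 ht.le, ht.le]

lemma summable_ED {t : ℝ} (ht : 0 < t) :
    Summable (fun n : ℕ => Real.exp (-((n:ℝ)+1) * ((n:ℝ)+2) * t) / (((n:ℝ)+1) * ((n:ℝ)+2))) := by
  apply Summable.of_nonneg_of_le (fun n => by positivity) (fun n => ?_) (summable_E ht)
  have h1 : (1:ℝ) ≤ ((n:ℝ)+1) * ((n:ℝ)+2) := by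
    have : (0:ℝ) ≤ n := Nat.cast_nonneg n
    nlinarith
  calc Real.exp (-((n:ℝ)+1) * ((n:ℝ)+2) * t) / (((n:ℝ)+1) * ((n:ℝ)+2))
      ≤ Real.exp (-((n:ℝ)+1) * ((n:ℝ)+2) * t) := div_le_self (Real.exp_pos _).le h1
    _ = _ := rfl

lemma antitoneOn_gauss {t : ℝ} (ht : 0 < t) (x₀ : ℝ) (hx₀ : 0 ≤ x₀) (a : ℝ) :
    AntitoneOn (fun x : ℝ => Real.exp (-t * x ^ 2)) (Icc x₀ (x₀ + a)) := by
  intro x hx y hy hxy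
  apply Real.exp_le_exp.2
  have hx0 : 0 ≤ x := le_trans hx₀ hx.1
  have hy0 : 0 ≤ y := le_trans hx₀ hy.1
  nlinarith [mul_nonneg (mul_nonneg ht.le (sub_nonneg.2 hxy)) (add_nonneg hx0 hy0)]

lemma partial_D_le (N : ℕ) :
    ∑ i ∈ Finset.range N, (1:ℝ) / (((i:ℝ)+1) * ((i:ℝ)+2)) = 1 - 1 / ((N:ℝ)+1) := by
  induction N with
  | zero => simp
  | succ n ih =>
    rw [Finset.sum_range_succ, ih]
    have h1 : ((n:ℝ)+1) ≠ 0 := by positivity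
    have h2 : ((n:ℝ)+2) ≠ 0 := by positivity
    push_cast
    field_simp
    ring

lemma B_le_one {t : ℝ} (ht : 0 < t) :
    (∑' n : ℕ, Real.exp (-((n:ℝ)+1) * ((n:ℝ)+2) * t) / (((n:ℝ)+1) * ((n:ℝ)+2))) ≤ 1 := by
  apply Real.tsum_le_of_sum_range_le (fun n => by positivity)
  intro N
  calc ∑ i ∈ Finset.range N, Real.exp (-((i:ℝ)+1) * ((i:ℝ)+2) * t) / (((i:ℝ)+1) * ((i:ℝ)+2))
      ≤ ∑ i ∈ Finset.range N, (1:ℝ) / (((i:ℝ)+1) * ((i:ℝ)+2)) := by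
        apply Finset.sum_le_sum
        intro i _
        gcongr
        exact Real.exp_le_one_iff.2 (by nlinarith [(Nat.cast_nonneg i : (0:ℝ) ≤ (i:ℝ)), ht.le, mul_nonneg (Nat.cast_nonneg i : (0:ℝ) ≤ (i:ℝ)) ht.le, mul_nonneg (mul_nonneg (Nat.cast_nonneg i : (0:ℝ) ≤ (i:ℝ)) (Nat.cast_nonneg i : (0:ℝ) ≤ (i:ℝ))) ht.le])
    _ = 1 - 1 / ((N:ℝ)+1) := partial_D_le N
    _ ≤ 1 := by
        have : (0:ℝ) < (N:ℝ)+1 := by positivity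
        have : (0:ℝ) ≤ 1 / ((N:ℝ)+1) := by positivity
        linarith

lemma A_le_I {t : ℝ} (ht : 0 < t) :
    (∑' n : ℕ, Real.exp (-((n:ℝ)+1) * ((n:ℝ)+2) * t))
      ≤ ∫ x in Ioi (0:ℝ), Real.exp (-t * x ^ 2) := by
  have hint : IntegrableOn (fun x : ℝ => Real.exp (-t * x ^ 2)) (Ioi 0) :=
    (integrable_exp_neg_mul_sq ht).integrableOn
  apply Real.tsum_le_of_sum_range_le (fun n => (Real.exp_pos _).le)
  intro N
  have h1 : ∑ i ∈ Finset.range N, Real.exp (-((i:ℝ)+1) * ((i:ℝ)+2) * t)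
      ≤ ∑ i ∈ Finset.range N, (fun x : ℝ => Real.exp (-t * x ^ 2)) ((0:ℝ) + ((i+1 : ℕ):ℝ)) := by
    apply Finset.sum_le_sum
    intro i _
    simp only [zero_add]
    push_cast
    apply Real.exp_le_exp.2
    have h0 : (0:ℝ) ≤ (i:ℝ) := Nat.cast_nonneg i
    nlinarith [mul_nonneg h0 ht.le, ht.le]
  have h2 := (antitoneOn_gauss ht 0 le_rfl N).sum_le_integral (a := N)
  have h3 : (∫ x in (0:ℝ)..(0 + (N:ℝ)), Real.exp (-t * x ^ 2))
      ≤ ∫ x in Ioi (0:ℝ), Real.exp (-t * x ^ 2) := by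
    rw [zero_add, intervalIntegral.integral_of_le (Nat.cast_nonneg N)]
    apply setIntegral_mono_set hint
    · exact Eventually.of_forall fun x => (Real.exp_pos _).le
    · exact Eventually.of_forall fun x hx => hx.1
  exact le_trans h1 (le_trans h2 h3)

lemma I_le_A {t : ℝ} (ht : 0 < t) :
    (∫ x in Ioi (0:ℝ), Real.exp (-t * x ^ 2)) - 2
      ≤ ∑' n : ℕ, Real.exp (-((n:ℝ)+1) * ((n:ℝ)+2) * t) := by
  have hint : IntegrableOn (fun x : ℝ => Real.exp (-t * x ^ 2)) (Ioi (0:ℝ)) :=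
    (integrable_exp_neg_mul_sq ht).integrableOn
  have hint2 : IntegrableOn (fun x : ℝ => Real.exp (-t * x ^ 2)) (Ioi (2:ℝ)) :=
    hint.mono_set (Ioi_subset_Ioi (by norm_num))
  -- each truncated integral ≤ tsum
  have key : ∀ N : ℕ, (∫ x in (2:ℝ)..(2 + (N:ℝ)), Real.exp (-t * x ^ 2))
      ≤ ∑' n : ℕ, Real.exp (-((n:ℝ)+1) * ((n:ℝ)+2) * t) := by
    intro N
    have h2 := (antitoneOn_gauss ht 2 (by norm_num) N).integral_le_sum (a := N)
    have h1 : ∑ i ∈ Finset.range N, (fun x : ℝ => Real.exp (-t * x ^ 2)) ((2:ℝ) + (i:ℝ))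
        ≤ ∑ i ∈ Finset.range N, Real.exp (-((i:ℝ)+1) * ((i:ℝ)+2) * t) := by
      apply Finset.sum_le_sum
      intro i _
      apply Real.exp_le_exp.2
      have h0 : (0:ℝ) ≤ (i:ℝ) := Nat.cast_nonneg i
      nlinarith [mul_nonneg h0 ht.le, ht.le]
    have h0 : ∑ i ∈ Finset.range N, Real.exp (-((i:ℝ)+1) * ((i:ℝ)+2) * t)
        ≤ ∑' n : ℕ, Real.exp (-((n:ℝ)+1) * ((n:ℝ)+2) * t) :=
      Summable.sum_le_tsum _ (fun i _ => (Real.exp_pos _).le) (summable_E ht)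
    exact le_trans h2 (le_trans h1 h0)
  have htend : Tendsto (fun N : ℕ => ∫ x in (2:ℝ)..(2 + (N:ℝ)), Real.exp (-t * x ^ 2))
      atTop (nhds (∫ x in Ioi (2:ℝ), Real.exp (-t * x ^ 2))) := by
    apply intervalIntegral_tendsto_integral_Ioi _ hint2
    apply tendsto_atTop_add_const_left
    exact tendsto_natCast_atTop_atTop
  have h4 : (∫ x in Ioi (2:ℝ), Real.exp (-t * x ^ 2))
      ≤ ∑' n : ℕ, Real.exp (-((n:ℝ)+1) * ((n:ℝ)+2) * t) :=
    le_of_tendsto htend (Eventually.of_forall key)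
  -- split the integral
  have hsplit : (∫ x in Ioi (0:ℝ), Real.exp (-t * x ^ 2))
      = (∫ x in Ioc (0:ℝ) 2, Real.exp (-t * x ^ 2))
        + ∫ x in Ioi (2:ℝ), Real.exp (-t * x ^ 2) := by
    rw [← setIntegral_union (Ioc_disjoint_Ioi le_rfl) measurableSet_Ioi
      (hint.mono_set Ioc_subset_Ioi_self) hint2, Ioc_union_Ioi_eq_Ioi (by norm_num)]
  have hsmall : (∫ x in Ioc (0:ℝ) 2, Real.exp (-t * x ^ 2)) ≤ 2 := by
    calc (∫ x in Ioc (0:ℝ) 2, Real.exp (-t * x ^ 2))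
        ≤ ∫ _ in Ioc (0:ℝ) 2, (1:ℝ) := by
          apply setIntegral_mono_on (hint.mono_set Ioc_subset_Ioi_self)
            (integrableOn_const (by simp) (by simp)) measurableSet_Ioc
          intro x hx
          exact Real.exp_le_one_iff.2 (by nlinarith [hx.1.le])
      _ = 2 := by simp
  linarith

end HKDaux

open HKDaux

theorem heat_kernel_diagonal_asymp :
    (fun t : ℝ =>
        (∑' ℓ : ℕ, Real.exp (-((ℓ : ℝ) + 1) * ((ℓ : ℝ) + 2) * t)
            * (2 * ((ℓ : ℝ) + 1) + 1) ^ 2 / (((ℓ : ℝ) + 1) * ((ℓ : ℝ) + 2)))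
          - 2 * Real.sqrt (π / t))
      =O[nhdsWithin 0 (Set.Ioi 0)] (fun _ : ℝ => (1 : ℝ)) := by
  rw [isBigO_iff]
  refine ⟨9, ?_⟩
  filter_upwards [self_mem_nhdsWithin] with t ht
  have ht : (0:ℝ) < t := ht
  have hterm : ∀ n : ℕ,
      Real.exp (-((n : ℝ) + 1) * ((n : ℝ) + 2) * t)
            * (2 * ((n : ℝ) + 1) + 1) ^ 2 / (((n : ℝ) + 1) * ((n : ℝ) + 2))
      = 4 * Real.exp (-((n:ℝ)+1) * ((n:ℝ)+2) * t)
        + Real.exp (-((n:ℝ)+1) * ((n:ℝ)+2) * t) / (((n:ℝ)+1) * ((n:ℝ)+2)) := by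
    intro n
    have h1 : ((n:ℝ)+1) ≠ 0 := by positivity
    have h2 : ((n:ℝ)+2) ≠ 0 := by positivity
    field_simp
    ring
  have hsum : (∑' ℓ : ℕ, Real.exp (-((ℓ : ℝ) + 1) * ((ℓ : ℝ) + 2) * t)
            * (2 * ((ℓ : ℝ) + 1) + 1) ^ 2 / (((ℓ : ℝ) + 1) * ((ℓ : ℝ) + 2)))
      = 4 * (∑' n : ℕ, Real.exp (-((n:ℝ)+1) * ((n:ℝ)+2) * t))
        + ∑' n : ℕ, Real.exp (-((n:ℝ)+1) * ((n:ℝ)+2) * t) / (((n:ℝ)+1) * ((n:ℝ)+2)) := by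
    rw [tsum_congr hterm, Summable.tsum_add ((summable_E ht).mul_left 4) (summable_ED ht),
      tsum_mul_left]
  have hI : (∫ x in Ioi (0:ℝ), Real.exp (-t * x ^ 2)) = Real.sqrt (π / t) / 2 :=
    integral_gaussian_Ioi t
  have hA1 := A_le_I ht
  have hA2 := I_le_A ht
  have hB1 := B_le_one ht
  have hB0 : (0:ℝ) ≤ ∑' n : ℕ, Real.exp (-((n:ℝ)+1) * ((n:ℝ)+2) * t) / (((n:ℝ)+1) * ((n:ℝ)+2)) :=
    tsum_nonneg (fun n => by positivity)
  rw [hsum]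
  rw [norm_one, mul_one, Real.norm_eq_abs, abs_le]
  constructor <;> [skip; skip] <;> rw [hI] at hA1 hA2 <;> linarith
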